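/- Let (X, ↪, P) be a primal-proximity space and define cl*(A) := A ∪ A^↪, where A^↪ := {x ∈ X : {x} ↪ A}. Then for all A, B ⊆ X: (1) B ̸↪ A if and only if B ̸↪ cl*(A); (2) cl*(A^↪) = A^↪; (3) cl*(A^↪) = (cl*(A))^↪. -/
import Mathlib


open Set

/-- A collection `P` of subsets of `X` is a *primal* on `X`. -/
def IsPrimalOn {X : Type*} (P : Set (Set X)) : Prop :=
  (Set.univ : Set X) ∉ P ∧
  (∀ A B : Set X, A ∈ P → B ⊆ A → B ∈ P) ∧
  (∀ A B : Set X, A ∩ B ∈ P → A ∈ P ∨ B ∈ P)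

/-- A binary relation `r` on the power set of `X` is a *primal-proximity* with
respect to a primal `P` on `X`. -/
def IsPrimalProximity {X : Type*} (P : Set (Set X)) (r : Set X → Set X → Prop) : Prop :=
  (∀ A B : Set X, r A B → r B A) ∧
  (∀ A B C : Set X, r A (B ∪ C) ↔ (r A B ∨ r A C)) ∧
  (∀ A : Set X, Aᶜ ∉ P → ∀ B : Set X, ¬ r A B) ∧
  (∀ A B : Set X, (A ∩ B)ᶜ ∈ P → r A B) ∧
  (∀ A B : Set X, ¬ r A B →
    ∃ C D : Set X, ¬ r A Cᶜ ∧ ¬ r Dᶜ B ∧ (C ∩ D)ᶜ ∉ P)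

/-- The point-primal proximity of `A`: `A^↪ = {x | {x} ↪ A}`. -/
def ppp {X : Type*} (r : Set X → Set X → Prop) (A : Set X) : Set X :=
  {x : X | r {x} A}

private lemma mono_right {X : Type*} {P : Set (Set X)} {r : Set X → Set X → Prop}
    (hr : IsPrimalProximity P r) {B A' A : Set X} (h : r B A') (hsub : A' ⊆ A) : r B A := by
  have := (hr.2.1 B A' A).mpr (Or.inl h)
  rwa [Set.union_eq_self_of_subset_left hsub] at this

private lemma mono_left {X : Type*} {P : Set (Set X)} {r : Set X → Set X → Prop}
    (hr : IsPrimalProximity P r) {B' B A : Set X} (h : r B' A) (hsub : B' ⊆ B) : r B A :=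
  hr.1 _ _ (mono_right hr (hr.1 _ _ h) hsub)

private lemma key {X : Type*} {P : Set (Set X)} {r : Set X → Set X → Prop}
    (hP : IsPrimalOn P) (hr : IsPrimalProximity P r) {A B : Set X}
    (h : ¬ r B A) : ¬ r B (A ∪ ppp r A) := by
  obtain ⟨C, D, hBC, hDA, hCD⟩ := hr.2.2.2.2 B A h
  have hpD : ppp r A ⊆ D := by
    intro x hx
    by_contra hxD
    exact hDA (mono_left hr hx (by intro y hy; cases hy; exact hxD))
  -- ¬ r B (ppp r A ∩ C) : it's a subset of C ∩ D whose complement is not in P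
  have h1 : ¬ r B (ppp r A ∩ C) := by
    intro hcon
    have hsubset : ppp r A ∩ C ⊆ C ∩ D := fun x hx => ⟨hx.2, hpD hx.1⟩
    have hnotP : (ppp r A ∩ C)ᶜ ∉ P := fun hmem =>
      hCD (hP.2.1 _ _ hmem (Set.compl_subset_compl.mpr hsubset))
    exact hr.2.2.1 _ hnotP B (hr.1 _ _ hcon)
  have h2 : ¬ r B (ppp r A ∩ Cᶜ) := fun hcon =>
    hBC (mono_right hr hcon (Set.inter_subset_right))
  have h3 : ¬ r B (ppp r A) := by
    intro hcon
    have : ppp r A = (ppp r A ∩ C) ∪ (ppp r A ∩ Cᶜ) := by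
      rw [← Set.inter_union_distrib_left, Set.union_compl_self, Set.inter_univ]
    rw [this, hr.2.1] at hcon
    rcases hcon with hc | hc
    · exact h1 hc
    · exact h2 hc
  intro hcon
  rw [hr.2.1] at hcon
  rcases hcon with hc | hc
  · exact h hc
  · exact h3 hc

theorem stmt_18 {X : Type*} [Nonempty X] (P : Set (Set X)) (r : Set X → Set X → Prop)
    (hP : IsPrimalOn P) (hr : IsPrimalProximity P r) (A B : Set X) :
    (¬ r B A ↔ ¬ r B (A ∪ ppp r A)) ∧
    (ppp r A ∪ ppp r (ppp r A) = ppp r A) ∧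
    (ppp r A ∪ ppp r (ppp r A) = ppp r (A ∪ ppp r A)) := by
  have hiff : ∀ B' : Set X, ¬ r B' A ↔ ¬ r B' (A ∪ ppp r A) := fun B' =>
    ⟨key hP hr, fun h hc => h (mono_right hr hc Set.subset_union_left)⟩
  have h2 : ppp r A ∪ ppp r (ppp r A) = ppp r A := by
    apply Set.union_eq_self_of_subset_right
    intro x hx
    by_contra hxA
    exact ((hiff {x}).mp hxA) (mono_right hr (hx : r {x} (ppp r A)) Set.subset_union_right)
  refine ⟨hiff B, h2, ?_⟩
  rw [h2]
  ext x
  simp only [ppp, Set.mem_setOf_eq]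
  constructor
  · exact fun hx => mono_right hr hx Set.subset_union_left
  · intro hx
    by_contra hxA
    exact ((hiff {x}).mp hxA) hx
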